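/- The set F of feasible vectors is closed and convex; F equals the intersection ⋂_{λ ∈ Λ₁} H_λ of the half-spaces H_λ over all λ ∈ Λ₁; and F equals the full image P_c(ℝⁿ) = {P_c(x) : x ∈ ℝⁿ}. -/

import Mathlib

open Matrix Set

noncomputable section

/-- `A` is irreducible: for every nonempty proper subset `α` of the index set,
the submatrix `A[α, αᶜ]` is not the zero matrix. -/
def IsIrred {k : ℕ} (A : Matrix (Fin k) (Fin k) ℝ) : Prop :=
  ∀ α : Finset (Fin k), α.Nonempty → α ≠ Finset.univ → ∃ i ∈ α, ∃ j ∈ αᶜ, A i j ≠ 0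

/-- `A` is a Z-matrix: off-diagonal entries are nonpositive. -/
def IsZmat {k : ℕ} (A : Matrix (Fin k) (Fin k) ℝ) : Prop :=
  ∀ i j, i ≠ j → A i j ≤ 0

/-- `A` is an M-matrix: a Z-matrix all of whose eigenvalues have nonnegative real part. -/
def IsMmat {k : ℕ} (A : Matrix (Fin k) (Fin k) ℝ) : Prop :=
  IsZmat A ∧ ∀ μ ∈ spectrum ℂ (A.map (Complex.ofReal)), 0 ≤ μ.re

/-- `A` is a nonsingular M-matrix: a Z-matrix all of whose eigenvalues have positive real part. -/
def IsNonsingMmat {k : ℕ} (A : Matrix (Fin k) (Fin k) ℝ) : Prop :=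
  IsZmat A ∧ ∀ μ ∈ spectrum ℂ (A.map (Complex.ofReal)), 0 < μ.re

/-- `P_c(x) = [x] Y (V* − x)`. -/
def Pc {k : ℕ} (Y : Matrix (Fin k) (Fin k) ℝ) (Vs : Fin k → ℝ) (x : Fin k → ℝ) : Fin k → ℝ :=
  Matrix.diagonal x *ᵥ (Y *ᵥ (Vs - x))

/-- Jacobian of `P_c` at `x`: `J(x) = [Y(V* − x)] − [x] Y`. -/
def Jmat {k : ℕ} (Y : Matrix (Fin k) (Fin k) ℝ) (Vs : Fin k → ℝ) (x : Fin k → ℝ) :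
    Matrix (Fin k) (Fin k) ℝ :=
  Matrix.diagonal (Y *ᵥ (Vs - x)) - Matrix.diagonal x * Y

/-- long-term voltage stable operating points. -/
def Dset {k : ℕ} (Y : Matrix (Fin k) (Fin k) ℝ) (Vs : Fin k → ℝ) : Set (Fin k → ℝ) :=
  {x | (∀ i, 0 < x i) ∧ IsUnit (Jmat Y Vs x).det ∧ ∀ i j, (Jmat Y Vs x)⁻¹ i j < 0}

/-- feasible power demands. -/
def Fset {k : ℕ} (Y : Matrix (Fin k) (Fin k) ℝ) (Vs : Fin k → ℝ) : Set (Fin k → ℝ) :=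
  {P | ∃ x, (∀ i, 0 < x i) ∧ Pc Y Vs x = P}

/-- `h(λ) = (1/2)([λ] Y + Y [λ])`. -/
def hmat {k : ℕ} (Y : Matrix (Fin k) (Fin k) ℝ) (l : Fin k → ℝ) : Matrix (Fin k) (Fin k) ℝ :=
  (1/2 : ℝ) • (Matrix.diagonal l * Y + Y * Matrix.diagonal l)

/-- `Λ₁ = {λ ∈ Λ : λ > 0, 1ᵀλ = 1}`. -/
def Lam1 {k : ℕ} (Y : Matrix (Fin k) (Fin k) ℝ) : Set (Fin k → ℝ) :=
  {l | (hmat Y l).PosDef ∧ (∀ i, 0 < l i) ∧ ∑ i, l i = 1}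

/-- `φ(λ) = (1/2) h(λ)⁻¹ [λ] I*` where `I* = Y V*`. -/
def phiv {k : ℕ} (Y : Matrix (Fin k) (Fin k) ℝ) (Vs : Fin k → ℝ) (l : Fin k → ℝ) : Fin k → ℝ :=
  (1/2 : ℝ) • ((hmat Y l)⁻¹ *ᵥ (Matrix.diagonal l *ᵥ (Y *ᵥ Vs)))

/-- `‖x‖_{h(λ)}²  = xᵀ h(λ) x`. -/
def qnorm {k : ℕ} (Y : Matrix (Fin k) (Fin k) ℝ) (l x : Fin k → ℝ) : ℝ :=
  x ⬝ᵥ (hmat Y l *ᵥ x)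

/-- The half-space `H_λ`. -/
def Hset {k : ℕ} (Y : Matrix (Fin k) (Fin k) ℝ) (Vs : Fin k → ℝ) (l : Fin k → ℝ) :
    Set (Fin k → ℝ) :=
  {y | l ⬝ᵥ y ≤ qnorm Y l (phiv Y Vs l)}


set_option maxHeartbeats 1000000

namespace S17



variable {n : ℕ}

lemma pc_apply (Y : Matrix (Fin n) (Fin n) ℝ) (Vs x : Fin n → ℝ) (i : Fin n) :
    Pc Y Vs x i = x i * ((Y *ᵥ Vs) i - (Y *ᵥ x) i) := by
  simp [Pc, Matrix.mulVec_diagonal, Matrix.mulVec_sub, Pi.sub_apply]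

lemma continuous_pc_apply (Y : Matrix (Fin n) (Fin n) ℝ) (Vs : Fin n → ℝ) (i : Fin n) :
    Continuous (fun x => Pc Y Vs x i) := by
  have h1 : Continuous (fun x : Fin n → ℝ => (Y *ᵥ x) i) := by
    simp only [Matrix.mulVec, dotProduct]
    exact continuous_finset_sum _ fun j _ => continuous_const.mul (continuous_apply j)
  simp only [pc_apply]
  exact (continuous_apply i).mul (continuous_const.sub h1)

lemma sym_dot {Y : Matrix (Fin n) (Fin n) ℝ} (hY : Yᵀ = Y) (x y : Fin n → ℝ) :
    x ⬝ᵥ (Y *ᵥ y) = y ⬝ᵥ (Y *ᵥ x) := by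
  rw [Matrix.dotProduct_mulVec]
  conv_lhs => rw [← hY]
  rw [Matrix.vecMul_transpose, dotProduct_comm]

lemma dot_self_pos {x : Fin n → ℝ} (hx : x ≠ 0) : 0 < x ⬝ᵥ x := by
  rcases Function.ne_iff.1 hx with ⟨i, hi⟩
  have : (0:ℝ) < x i * x i := mul_self_pos.2 hi
  calc (0:ℝ) < x i * x i := this
    _ ≤ ∑ j, x j * x j := Finset.single_le_sum (fun j _ => mul_self_nonneg (x j)) (Finset.mem_univ i)
  
lemma quad_pos {Y : Matrix (Fin n) (Fin n) ℝ} (hPD : Y.PosDef) {x : Fin n → ℝ} (hx : x ≠ 0) :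
    0 < x ⬝ᵥ (Y *ᵥ x) := by
  have := hPD.dotProduct_mulVec_pos hx
  simpa using this

lemma transpose_eq {Y : Matrix (Fin n) (Fin n) ℝ} (hPD : Y.PosDef) : Yᵀ = Y := by
  have h := hPD.1
  ext i j
  have := congrFun (congrFun h i) j
  simpa [Matrix.conjTranspose_apply] using this

lemma isHermitian_of_symm {M : Matrix (Fin n) (Fin n) ℝ} (h : Mᵀ = M) : M.IsHermitian := by
  ext i j
  have := congrFun (congrFun h i) j
  simpa [Matrix.conjTranspose_apply] using this

lemma diag_pos {Y : Matrix (Fin n) (Fin n) ℝ} (hPD : Y.PosDef) (i : Fin n) : 0 < Y i i := by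
  have h := quad_pos hPD (x := Pi.single i 1) (by
    intro h; have := congrFun h i; simp [Pi.single_apply] at this)
  simpa [Matrix.mulVec, dotProduct, Pi.single_apply, Finset.sum_ite_eq',
    Finset.mul_sum] using h

lemma abs_quad_le {M : Matrix (Fin n) (Fin n) ℝ} (hZM : IsZmat M) (x : Fin n → ℝ) :
    (fun i => |x i|) ⬝ᵥ (M *ᵥ fun i => |x i|) ≤ x ⬝ᵥ (M *ᵥ x) := by
  simp only [dotProduct, Matrix.mulVec, Finset.mul_sum]
  refine Finset.sum_le_sum fun i _ => Finset.sum_le_sum fun j _ => ?_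
  rcases eq_or_ne i j with rfl | hij
  · have : |x i| * (M i i * |x i|) = M i i * (|x i| * |x i|) := by ring
    rw [this, abs_mul_abs_self]
    nlinarith []
  · have hM := hZM i j hij
    have h1 : |x i| * (M i j * |x j|) = M i j * (|x i| * |x j|) := by ring
    have h2 : x i * (M i j * x j) = M i j * (x i * x j) := by ring
    rw [h1, h2]
    apply mul_le_mul_of_nonpos_left _ hM
    calc x i * x j ≤ |x i * x j| := le_abs_self _
      _ = |x i| * |x j| := abs_mul _ _

lemma continuous_quad (M : Matrix (Fin n) (Fin n) ℝ) :
    Continuous fun x : Fin n → ℝ => x ⬝ᵥ (M *ᵥ x) := by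
  simp only [dotProduct, Matrix.mulVec]
  exact continuous_finset_sum _ fun i _ => (continuous_apply i).mul
    (continuous_finset_sum _ fun j _ => continuous_const.mul (continuous_apply j))

lemma quad_coeff_zero {B C : ℝ} (h : ∀ t : ℝ, 0 ≤ 2*t*B + t^2*C) : B = 0 := by
  by_contra hB
  have hεpos : 0 < min 1 (1/(|C|+1)) := lt_min one_pos (by positivity)
  set ε : ℝ := min 1 (1/(|C|+1)) with hεdef
  have h1 := h (-(ε*B))
  have hεC : ε * C < 2 := by
    have h2 : ε ≤ 1/(|C|+1) := min_le_right _ _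
    have h3 : ε * C ≤ ε * |C| := mul_le_mul_of_nonneg_left (le_abs_self C) hεpos.le
    have h4 : ε * |C| ≤ (1/(|C|+1)) * |C| := mul_le_mul_of_nonneg_right h2 (abs_nonneg C)
    have h5 : (1/(|C|+1)) * |C| < 1 := by
      rw [div_mul_eq_mul_div, div_lt_one (by positivity)]
      linarith [abs_nonneg C]
    linarith
  have hB2 : 0 < B * B := mul_self_pos.2 hB
  nlinarith [h1, mul_pos hεpos hB2]

lemma quad_smul (M : Matrix (Fin n) (Fin n) ℝ) (c : ℝ) (x : Fin n → ℝ) :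
    (c • x) ⬝ᵥ (M *ᵥ (c • x)) = c^2 * (x ⬝ᵥ (M *ᵥ x)) := by
  rw [Matrix.mulVec_smul, dotProduct_smul, smul_dotProduct]
  simp [smul_eq_mul]; ring

lemma perron (hn : 1 ≤ n) (M : Matrix (Fin n) (Fin n) ℝ) (hsym : Mᵀ = M)
    (hZM : IsZmat M) (hirrM : IsIrred M) :
    ∃ (μ : ℝ) (w : Fin n → ℝ), (∀ i, 0 < w i) ∧ M *ᵥ w = μ • w ∧
      ∀ x : Fin n → ℝ, μ * (x ⬝ᵥ x) ≤ x ⬝ᵥ (M *ᵥ x) := by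
  classical
  have i0 : Fin n := ⟨0, hn⟩
  set f : (Fin n → ℝ) → ℝ := fun x => x ⬝ᵥ (M *ᵥ x) with hfdef
  set S : Set (Fin n → ℝ) := {x | x ⬝ᵥ x = 1} with hSdef
  have hSne : (Pi.single i0 1 : Fin n → ℝ) ∈ S := by
    simp only [hSdef, Set.mem_setOf_eq, dotProduct]
    rw [Finset.sum_eq_single i0]
    · simp
    · intro j _ hj; simp [Pi.single_apply, hj]
    · intro h; exact absurd (Finset.mem_univ i0) h
  have hcont_self : Continuous fun x : Fin n → ℝ => x ⬝ᵥ x := by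
    simp only [dotProduct]
    exact continuous_finset_sum _ fun i _ => (continuous_apply i).mul (continuous_apply i)
  have hSclosed : IsClosed S := isClosed_eq hcont_self continuous_const
  have hSsub : S ⊆ Metric.closedBall 0 1 := by
    intro x hx
    rw [Metric.mem_closedBall, dist_zero_right]
    refine (pi_norm_le_iff_of_nonneg zero_le_one).2 fun i => ?_
    rw [Real.norm_eq_abs, abs_le_one_iff_mul_self_le_one]
    calc x i * x i ≤ ∑ j, x j * x j :=
          Finset.single_le_sum (fun j _ => mul_self_nonneg (x j)) (Finset.mem_univ i)
      _ = 1 := hx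
  have hScompact : IsCompact S :=
    (isCompact_closedBall 0 1).of_isClosed_subset hSclosed hSsub
  obtain ⟨v, hvS, hvmin⟩ := hScompact.exists_isMinOn ⟨_, hSne⟩ (continuous_quad M).continuousOn
  set μ : ℝ := f v with hμdef
  -- global lower bound
  have hlow : ∀ x : Fin n → ℝ, μ * (x ⬝ᵥ x) ≤ f x := by
    intro x
    rcases eq_or_ne x 0 with rfl | hx
    · simp [hfdef, dotProduct]
    · have hr : 0 < x ⬝ᵥ x := dot_self_pos hx
      set c : ℝ := (Real.sqrt (x ⬝ᵥ x))⁻¹ with hcdef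
      have hsq : Real.sqrt (x ⬝ᵥ x) ^ 2 = x ⬝ᵥ x := Real.sq_sqrt hr.le
      have hsqpos : 0 < Real.sqrt (x ⬝ᵥ x) := Real.sqrt_pos.2 hr
      have hss : Real.sqrt (x ⬝ᵥ x) * Real.sqrt (x ⬝ᵥ x) = x ⬝ᵥ x :=
        Real.mul_self_sqrt hr.le
      have hc2 : c^2 * (x ⬝ᵥ x) = 1 := by
        rw [hcdef, show ((Real.sqrt (x ⬝ᵥ x))⁻¹)^2 * (x ⬝ᵥ x)
            = (x ⬝ᵥ x) / (Real.sqrt (x ⬝ᵥ x) * Real.sqrt (x ⬝ᵥ x)) by ring, hss,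
          div_self hr.ne']
      have hcx : (c • x) ∈ S := by
        show (c • x) ⬝ᵥ (c • x) = 1
        rw [show (c • x) ⬝ᵥ (c • x) = c^2 * (x ⬝ᵥ x) by
          rw [dotProduct_smul, smul_dotProduct]; simp only [smul_eq_mul]; ring]
        exact hc2
      have h1 : μ ≤ f (c • x) := hvmin hcx
      have h2 : f (c • x) = c^2 * f x := quad_smul M c x
      have h3 : μ * (x ⬝ᵥ x) ≤ (c^2 * f x) * (x ⬝ᵥ x) :=
        mul_le_mul_of_nonneg_right (h2 ▸ h1) hr.le
      have h4 : (c^2 * f x) * (x ⬝ᵥ x) = f x := by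
        calc (c^2 * f x) * (x ⬝ᵥ x) = f x * (c^2 * (x ⬝ᵥ x)) := by ring
          _ = f x := by rw [hc2, mul_one]
      linarith
  -- eigen equation at any minimizer
  have heig : ∀ v' : Fin n → ℝ, v' ∈ S → f v' = μ → M *ᵥ v' = μ • v' := by
    intro v' hv'S hfv'
    have hB : ∀ y : Fin n → ℝ, y ⬝ᵥ (M *ᵥ v') - μ * (y ⬝ᵥ v') = 0 := by
      intro y
      apply quad_coeff_zero (C := y ⬝ᵥ (M *ᵥ y) - μ * (y ⬝ᵥ y))
      intro t
      have h0 := hlow (v' + t • y)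
      have hexp : f (v' + t • y) - μ * ((v' + t • y) ⬝ᵥ (v' + t • y)) =
          2*t*(y ⬝ᵥ (M *ᵥ v') - μ * (y ⬝ᵥ v')) + t^2*(y ⬝ᵥ (M *ᵥ y) - μ * (y ⬝ᵥ y)) := by
        simp only [hfdef, Matrix.mulVec_add, Matrix.mulVec_smul, dotProduct_add,
          add_dotProduct, dotProduct_smul, smul_dotProduct, smul_eq_mul]
        rw [sym_dot hsym v' y, dotProduct_comm v' y]
        have hv1 : v' ⬝ᵥ v' = 1 := hv'S
        rw [hv1]
        have hfv'' : v' ⬝ᵥ (M *ᵥ v') = μ := hfv'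
        rw [hfv'']
        ring
      linarith [h0, hexp.ge, hexp.le]
    funext i
    have hBi := hB (Pi.single i 1)
    have h1 : (Pi.single i 1 : Fin n → ℝ) ⬝ᵥ (M *ᵥ v') = (M *ᵥ v') i := by
      simp [dotProduct, Pi.single_apply, Finset.sum_ite_eq']
    have h2 : (Pi.single i 1 : Fin n → ℝ) ⬝ᵥ v' = v' i := by
      simp [dotProduct, Pi.single_apply, Finset.sum_ite_eq']
    rw [h1, h2] at hBi
    have : (M *ᵥ v') i = μ * v' i := by linarith
    simpa [Pi.smul_apply, smul_eq_mul] using this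
  -- pass to absolute values
  set w : Fin n → ℝ := fun i => |v i| with hwdef
  have hwS : w ∈ S := by
    show w ⬝ᵥ w = 1
    have : w ⬝ᵥ w = v ⬝ᵥ v := by
      simp only [dotProduct, hwdef]
      exact Finset.sum_congr rfl fun i _ => abs_mul_abs_self (v i)
    rw [this]; exact hvS
  have hfw : f w = μ := by
    have hle : f w ≤ f v := abs_quad_le hZM v
    have hge : μ ≤ f w := by
      have := hlow w
      rw [show w ⬝ᵥ w = 1 from hwS] at this
      simpa using this
    exact le_antisymm hle hge
  have hweig : M *ᵥ w = μ • w := heig w hwS hfw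
  -- strict positivity
  have hwnn : ∀ i, 0 ≤ w i := fun i => abs_nonneg (v i)
  classical
  set E : Finset (Fin n) := Finset.univ.filter (fun i => w i = 0) with hEdef
  have hEprop : ∀ i ∈ E, ∀ j, M i j ≠ 0 → w j = 0 := by
    intro i hiE j hMij
    have hwi : w i = 0 := (Finset.mem_filter.1 hiE).2
    have hMwi : (M *ᵥ w) i = 0 := by
      rw [hweig]; simp [Pi.smul_apply, smul_eq_mul, hwi]
    have hnonpos : ∀ j ∈ Finset.univ, M i j * w j ≤ 0 := by
      intro k _
      rcases eq_or_ne i k with rfl | hik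
      · rw [hwi]; simp
      · exact mul_nonpos_of_nonpos_of_nonneg (hZM i k hik) (hwnn k)
    have hall := (Finset.sum_eq_zero_iff_of_nonpos hnonpos).1 hMwi
    have hj := hall j (Finset.mem_univ j)
    rcases mul_eq_zero.1 hj with h | h
    · exact absurd h hMij
    · exact h
  have hEnotuniv : E ≠ Finset.univ := by
    intro hE
    have : ∀ i, w i = 0 := by
      intro i
      have : i ∈ E := hE ▸ Finset.mem_univ i
      exact (Finset.mem_filter.1 this).2
    have h1 : w ⬝ᵥ w = 0 := by simp [dotProduct, this]
    rw [show w ⬝ᵥ w = 1 from hwS] at h1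
    norm_num at h1
  have hEempty : E = ∅ := by
    by_contra hne
    obtain ⟨i, hiE, j, hjE, hMij⟩ := hirrM E (Finset.nonempty_of_ne_empty hne) hEnotuniv
    have hjE' : j ∉ E := by simpa [Finset.mem_compl] using hjE
    have : w j = 0 := hEprop i hiE j hMij
    exact hjE' (Finset.mem_filter.2 ⟨Finset.mem_univ j, this⟩)
  have hwpos : ∀ i, 0 < w i := by
    intro i
    rcases (hwnn i).lt_or_eq with h | h
    · exact h
    · exfalso
      have : i ∈ E := Finset.mem_filter.2 ⟨Finset.mem_univ i, h.symm⟩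
      rw [hEempty] at this
      exact absurd this (Finset.notMem_empty i)
  exact ⟨μ, w, hwpos, hweig, hlow⟩




variable {n : ℕ}

lemma coercive (hn : 1 ≤ n) {Y : Matrix (Fin n) (Fin n) ℝ} (hPD : Y.PosDef)
    (hZ : IsZmat Y) (hirr : IsIrred Y) :
    ∃ m : ℝ, 0 < m ∧ ∀ x : Fin n → ℝ, m * (x ⬝ᵥ x) ≤ x ⬝ᵥ (Y *ᵥ x) := by
  obtain ⟨μ, w, hw, hweig, hlow⟩ := perron hn Y (transpose_eq hPD) hZ hirr
  have hwne : w ≠ 0 := by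
    intro h
    have := hw ⟨0, hn⟩
    rw [h] at this
    exact lt_irrefl 0 this
  have h1 : 0 < w ⬝ᵥ (Y *ᵥ w) := quad_pos hPD hwne
  have h2 : w ⬝ᵥ (Y *ᵥ w) = μ * (w ⬝ᵥ w) := by
    rw [hweig, dotProduct_smul, smul_eq_mul]
  have h3 : 0 < w ⬝ᵥ w := dot_self_pos hwne
  have hμ : 0 < μ := by
    rw [h2] at h1
    nlinarith
  exact ⟨μ, hμ, hlow⟩

/-- key lemma: symmetric irreducible Z-matrix with nonneg action on a positive vector. -/
lemma zmat_action (hn : 1 ≤ n) (M : Matrix (Fin n) (Fin n) ℝ) (hsym : Mᵀ = M)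
    (hZM : IsZmat M) (hirrM : IsIrred M) (u : Fin n → ℝ) (hu : ∀ i, 0 < u i)
    (hMu : ∀ i, 0 ≤ (M *ᵥ u) i) :
    (∀ x, 0 ≤ x ⬝ᵥ (M *ᵥ x)) ∧ ((∃ v, v ≠ 0 ∧ v ⬝ᵥ (M *ᵥ v) ≤ 0) → M *ᵥ u = 0) := by
  obtain ⟨μ, w, hw, hweig, hlow⟩ := perron hn M hsym hZM hirrM
  have hkey : w ⬝ᵥ (M *ᵥ u) = μ * (u ⬝ᵥ w) := by
    rw [sym_dot hsym w u, hweig, dotProduct_smul, smul_eq_mul]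
  have huw : 0 < u ⬝ᵥ w := by
    apply Finset.sum_pos (fun i _ => mul_pos (hu i) (hw i)) ⟨⟨0, hn⟩, Finset.mem_univ _⟩
  have hwMu : 0 ≤ w ⬝ᵥ (M *ᵥ u) :=
    Finset.sum_nonneg fun i _ => mul_nonneg (hw i).le (hMu i)
  have hμ : 0 ≤ μ := by
    by_contra h
    push_neg at h
    have : w ⬝ᵥ (M *ᵥ u) < 0 := by
      rw [hkey]
      exact mul_neg_of_neg_of_pos h huw
    linarith
  constructor
  · intro x
    calc (0:ℝ) ≤ μ * (x ⬝ᵥ x) := mul_nonneg hμ (by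
        rcases eq_or_ne x 0 with rfl | hx
        · simp [dotProduct]
        · exact (dot_self_pos hx).le)
      _ ≤ x ⬝ᵥ (M *ᵥ x) := hlow x
  · rintro ⟨v, hvne, hv⟩
    have hμ0 : μ = 0 := by
      have h1 := hlow v
      have h2 : 0 < v ⬝ᵥ v := dot_self_pos hvne
      nlinarith
    have : w ⬝ᵥ (M *ᵥ u) = 0 := by rw [hkey, hμ0, zero_mul]
    have hall := (Finset.sum_eq_zero_iff_of_nonneg
      (fun i (_ : i ∈ Finset.univ) => mul_nonneg (hw i).le (hMu i))).1 this
    funext i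
    have hi := hall i (Finset.mem_univ i)
    have := mul_eq_zero.1 hi
    rcases this with h | h
    · exact absurd h (hw i).ne'
    · exact h
  
lemma hmat_apply (Y : Matrix (Fin n) (Fin n) ℝ) (l : Fin n → ℝ) (i j : Fin n) :
    hmat Y l i j = (1/2) * (l i * Y i j + Y i j * l j) := by
  simp [hmat, Matrix.smul_apply, Matrix.add_apply, Matrix.diagonal_mul, Matrix.mul_diagonal,
    smul_eq_mul]

lemma hmat_transpose {Y : Matrix (Fin n) (Fin n) ℝ} (hY : Yᵀ = Y) (l : Fin n → ℝ) :
    (hmat Y l)ᵀ = hmat Y l := by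
  ext i j
  rw [Matrix.transpose_apply, hmat_apply, hmat_apply]
  have := congrFun (congrFun hY i) j
  rw [Matrix.transpose_apply] at this
  rw [← this]
  ring

lemma hmat_zmat {Y : Matrix (Fin n) (Fin n) ℝ} (hZ : IsZmat Y) {l : Fin n → ℝ}
    (hl : ∀ i, 0 ≤ l i) : IsZmat (hmat Y l) := by
  intro i j hij
  rw [hmat_apply]
  have h1 := hZ i j hij
  nlinarith [hl i, hl j]

lemma hmat_irred {Y : Matrix (Fin n) (Fin n) ℝ} (hirr : IsIrred Y) {l : Fin n → ℝ}
    (hl : ∀ i, 0 < l i) : IsIrred (hmat Y l) := by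
  intro α hne huniv
  obtain ⟨i, hi, j, hj, hYij⟩ := hirr α hne huniv
  refine ⟨i, hi, j, hj, ?_⟩
  rw [hmat_apply]
  intro h
  have h2 : (l i + l j) * Y i j = 0 := by linarith [h, mul_comm (Y i j) (l j)]
  rcases mul_eq_zero.1 h2 with h3 | h3
  · nlinarith [hl i, hl j]
  · exact hYij h3

lemma hmat_mulVec (Y : Matrix (Fin n) (Fin n) ℝ) (l x : Fin n → ℝ) (i : Fin n) :
    (hmat Y l *ᵥ x) i = (1/2) * (l i * (Y *ᵥ x) i + (Y *ᵥ (fun j => l j * x j)) i) := by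
  simp only [hmat, Matrix.smul_mulVec, Matrix.add_mulVec, Pi.smul_apply, Pi.add_apply,
    smul_eq_mul]
  congr 1
  congr 1
  · rw [← Matrix.mulVec_mulVec]
    simp [Matrix.mulVec_diagonal]
  · rw [← Matrix.mulVec_mulVec]
    congr 1
    funext j
    simp [Matrix.mulVec_diagonal]

lemma pc_expand (Y : Matrix (Fin n) (Fin n) ℝ) (Vs x d : Fin n → ℝ) (η : ℝ) (i : Fin n) :
    Pc Y Vs (x + η • d) i = Pc Y Vs x i
      + η * (d i * ((Y *ᵥ Vs) i - (Y *ᵥ x) i) - x i * (Y *ᵥ d) i)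
      - η^2 * (d i * (Y *ᵥ d) i) := by
  simp only [pc_apply, Matrix.mulVec_add, Matrix.mulVec_smul, Pi.add_apply, Pi.smul_apply,
    smul_eq_mul]
  ring

lemma subsol_coord_bound {m : ℝ} {Y : Matrix (Fin n) (Fin n) ℝ} {Vs : Fin n → ℝ}
    (hm : 0 < m) (hco : ∀ x : Fin n → ℝ, m * (x ⬝ᵥ x) ≤ x ⬝ᵥ (Y *ᵥ x))
    (P z : Fin n → ℝ) (hz : ∀ i, 0 ≤ z i) (hsub : ∀ i, P i ≤ Pc Y Vs z i) :
    ∀ i, z i ≤ max 1 ((2/m) * ((1/(2*m)) * ((Y *ᵥ Vs) ⬝ᵥ (Y *ᵥ Vs)) - ∑ j, P j)) := by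
  set I := Y *ᵥ Vs with hIdef
  have h1 : z ⬝ᵥ (Y *ᵥ z) ≤ z ⬝ᵥ I - ∑ j, P j := by
    have h2 : ∀ i, z i * (Y *ᵥ z) i ≤ z i * I i - P i := by
      intro i
      have := hsub i
      rw [pc_apply] at this
      nlinarith
    calc z ⬝ᵥ (Y *ᵥ z) = ∑ i, z i * (Y *ᵥ z) i := rfl
      _ ≤ ∑ i, (z i * I i - P i) := Finset.sum_le_sum fun i _ => h2 i
      _ = z ⬝ᵥ I - ∑ j, P j := by rw [Finset.sum_sub_distrib]; rfl
  have h3 : z ⬝ᵥ I ≤ (m/2) * (z ⬝ᵥ z) + (1/(2*m)) * (I ⬝ᵥ I) := by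
    have h4 : ∀ i, z i * I i ≤ (m/2) * (z i * z i) + (1/(2*m)) * (I i * I i) := by
      intro i
      have hsq := sq_nonneg (m * z i - I i)
      have key : m * (z i * I i) ≤ m * ((m/2) * (z i * z i) + (1/(2*m)) * (I i * I i)) := by
        have heq : m * ((1/(2*m)) * (I i * I i)) = (I i * I i)/2 := by
          field_simp
        rw [mul_add, heq]
        nlinarith
      exact le_of_mul_le_mul_left key hm
    calc z ⬝ᵥ I = ∑ i, z i * I i := rfl
      _ ≤ ∑ i, ((m/2) * (z i * z i) + (1/(2*m)) * (I i * I i)) :=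
          Finset.sum_le_sum fun i _ => h4 i
      _ = (m/2) * (z ⬝ᵥ z) + (1/(2*m)) * (I ⬝ᵥ I) := by
          rw [Finset.sum_add_distrib, ← Finset.mul_sum, ← Finset.mul_sum]; rfl
  have h5 : m * (z ⬝ᵥ z) ≤ z ⬝ᵥ (Y *ᵥ z) := hco z
  set R2 : ℝ := (2/m) * ((1/(2*m)) * (I ⬝ᵥ I) - ∑ j, P j) with hR2def
  have h6 : z ⬝ᵥ z ≤ R2 := by
    have h7 : (m/2) * (z ⬝ᵥ z) ≤ (1/(2*m)) * (I ⬝ᵥ I) - ∑ j, P j := by linarith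
    rw [hR2def]
    have := mul_le_mul_of_nonneg_left h7 (by positivity : (0:ℝ) ≤ 2/m)
    calc z ⬝ᵥ z = (2/m) * ((m/2) * (z ⬝ᵥ z)) := by
          field_simp
      _ ≤ (2/m) * ((1/(2*m)) * (I ⬝ᵥ I) - ∑ j, P j) := this
  intro i
  have h8 : z i * z i ≤ z ⬝ᵥ z :=
    Finset.single_le_sum (fun j (_ : j ∈ Finset.univ) => mul_self_nonneg (z j)) (Finset.mem_univ i)
  rcases le_total (z i) 1 with h | h
  · exact h.trans (le_max_left _ _)
  · refine le_trans ?_ (le_max_right _ _)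
    calc z i = z i * 1 := (mul_one _).symm
      _ ≤ z i * z i := mul_le_mul_of_nonneg_left h (hz i)
      _ ≤ R2 := h8.trans h6


variable {n : ℕ}

lemma mulVec_single_apply (Y : Matrix (Fin n) (Fin n) ℝ) (i j : Fin n) :
    (Y *ᵥ Pi.single i 1) j = Y j i := by
  simp [Matrix.mulVec, dotProduct, Pi.single_apply, Finset.sum_ite_eq']

lemma join_subsol_aux {Y : Matrix (Fin n) (Fin n) ℝ} {Vs : Fin n → ℝ} (hZ : IsZmat Y)
    {P x y : Fin n → ℝ} (hx0 : ∀ j, 0 ≤ x j) {i : Fin n} (hyx : y i ≤ x i)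
    (hPx : P i ≤ Pc Y Vs x i) (hxy : ∀ j, x j ≤ max (x j) (y j)) :
    P i ≤ Pc Y Vs (fun j => max (x j) (y j)) i := by
  set s : Fin n → ℝ := fun j => max (x j) (y j) with hsdef
  have hsi : s i = x i := max_eq_left hyx
  have hYs : (Y *ᵥ s) i ≤ (Y *ᵥ x) i := by
    show ∑ j, Y i j * s j ≤ ∑ j, Y i j * x j
    apply Finset.sum_le_sum
    intro j _
    rcases eq_or_ne i j with rfl | hij
    · rw [hsi]
    · exact mul_le_mul_of_nonpos_left (hxy j) (hZ i j hij)
  rw [pc_apply, hsi]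
  calc P i ≤ Pc Y Vs x i := hPx
    _ = x i * ((Y *ᵥ Vs) i - (Y *ᵥ x) i) := pc_apply _ _ _ _
    _ ≤ x i * ((Y *ᵥ Vs) i - (Y *ᵥ s) i) :=
        mul_le_mul_of_nonneg_left (sub_le_sub_left hYs _) (hx0 i)

lemma join_subsol {Y : Matrix (Fin n) (Fin n) ℝ} {Vs : Fin n → ℝ} (hZ : IsZmat Y)
    {P x y : Fin n → ℝ} (hx0 : ∀ j, 0 ≤ x j) (hy0 : ∀ j, 0 ≤ y j)
    (hPx : ∀ i, P i ≤ Pc Y Vs x i) (hPy : ∀ i, P i ≤ Pc Y Vs y i) :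
    ∀ i, P i ≤ Pc Y Vs (fun j => max (x j) (y j)) i := by
  intro i
  rcases le_total (y i) (x i) with h | h
  · exact join_subsol_aux hZ hx0 h (hPx i) (fun j => le_max_left _ _)
  · have := join_subsol_aux hZ hy0 h (hPy i) (fun j => le_max_left _ _)
    have hcomm : (fun j => max (y j) (x j)) = (fun j => max (x j) (y j)) := by
      funext j; exact max_comm _ _
    rwa [hcomm] at this

lemma sup_subsol (hn : 1 ≤ n) {Y : Matrix (Fin n) (Fin n) ℝ} {Vs : Fin n → ℝ}
    (hPD : Y.PosDef) (hZ : IsZmat Y) (hirr : IsIrred Y)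
    (P a : Fin n → ℝ) (ha : ∀ i, 0 < a i) (hsuba : ∀ i, P i ≤ Pc Y Vs a i) :
    ∃ xb : Fin n → ℝ, (∀ i, 0 < xb i) ∧ Pc Y Vs xb = P ∧
      ∀ z, (∀ i, 0 < z i) → (∀ i, P i ≤ Pc Y Vs z i) → ∀ i, z i ≤ xb i := by
  classical
  obtain ⟨m, hm, hco⟩ := coercive hn hPD hZ hirr
  set R : ℝ := max 1 ((2/m) * ((1/(2*m)) * ((Y *ᵥ Vs) ⬝ᵥ (Y *ᵥ Vs)) - ∑ j, P j)) with hRdef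
  have hbound : ∀ z : Fin n → ℝ, (∀ i, 0 ≤ z i) → (∀ i, P i ≤ Pc Y Vs z i) →
      ∀ i, z i ≤ R := fun z hz hs => subsol_coord_bound hm hco P z hz hs
  set S : Set (Fin n → ℝ) :=
    {x | (∀ i, a i ≤ x i) ∧ (∀ i, x i ≤ R + 1) ∧ ∀ i, P i ≤ Pc Y Vs x i} with hSdef
  have haS : a ∈ S := by
    refine ⟨fun i => le_refl _, fun i => ?_, hsuba⟩
    have := hbound a (fun i => (ha i).le) hsuba i
    linarith
  have hSjoin : ∀ x ∈ S, ∀ y ∈ S, x ⊔ y ∈ S := by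
    intro x hx y hy
    have hmax : (x ⊔ y) = fun j => max (x j) (y j) := rfl
    refine ⟨fun i => le_trans (hx.1 i) (le_max_left _ _), fun i => max_le (hx.2.1 i) (hy.2.1 i),
      ?_⟩
    exact join_subsol hZ (fun j => (ha j).le.trans (hx.1 j)) (fun j => (ha j).le.trans (hy.1 j))
      hx.2.2 hy.2.2
  have hSclosed : IsClosed S := by
    have hset : S = (⋂ i, {x : Fin n → ℝ | a i ≤ x i}) ∩
        ((⋂ i, {x : Fin n → ℝ | x i ≤ R + 1}) ∩ (⋂ i, {x : Fin n → ℝ | P i ≤ Pc Y Vs x i})) := by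
      ext x
      simp only [hSdef, Set.mem_setOf_eq, Set.mem_inter_iff, Set.mem_iInter]
    rw [hset]
    exact (isClosed_iInter fun i => isClosed_le continuous_const (continuous_apply i)).inter
      ((isClosed_iInter fun i => isClosed_le (continuous_apply i) continuous_const).inter
       (isClosed_iInter fun i => isClosed_le continuous_const (continuous_pc_apply Y Vs i)))
  -- the candidate maximal solution
  have himne : ∀ i : Fin n, ((fun x : Fin n → ℝ => x i) '' S).Nonempty :=
    fun i => ⟨a i, a, haS, rfl⟩
  have himbdd : ∀ i : Fin n, BddAbove ((fun x : Fin n → ℝ => x i) '' S) := by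
    intro i
    refine ⟨R + 1, ?_⟩
    rintro t ⟨x, hxS, rfl⟩
    exact hxS.2.1 i
  set xb : Fin n → ℝ := fun i => sSup ((fun x : Fin n → ℝ => x i) '' S) with hxbdef
  have hle_xb : ∀ x ∈ S, ∀ i, x i ≤ xb i := by
    intro x hx i
    exact le_csSup (himbdd i) ⟨x, hx, rfl⟩
  have hxb_leR : ∀ i, xb i ≤ R := by
    intro i
    apply csSup_le (himne i)
    rintro t ⟨x, hxS, rfl⟩
    exact hbound x (fun j => (ha j).le.trans (hxS.1 j)) hxS.2.2 i
  have hxb_ge_a : ∀ i, a i ≤ xb i := fun i => hle_xb a haS i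
  -- xb belongs to S
  have hxbS : xb ∈ S := by
    have hseq : ∀ k : ℕ, ∃ y ∈ S, ∀ i, xb i - 1/(k+1 : ℝ) ≤ y i ∧ y i ≤ xb i := by
      intro k
      have hk : (0:ℝ) < 1/(k+1 : ℝ) := by positivity
      have hz : ∀ i : Fin n, ∃ z ∈ S, xb i - 1/(k+1 : ℝ) < z i := by
        intro i
        have hlt : xb i - 1/(k+1:ℝ) < sSup ((fun x : Fin n → ℝ => x i) '' S) := by
          have hrfl : sSup ((fun x : Fin n → ℝ => x i) '' S) = xb i := rfl
          rw [hrfl]; linarith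
        obtain ⟨t, ⟨z, hzS, rfl⟩, hzt⟩ := exists_lt_of_lt_csSup (himne i) hlt
        exact ⟨z, hzS, hzt⟩
      choose z hzS hzlt using hz
      have hne : (Finset.univ : Finset (Fin n)).Nonempty := ⟨⟨0, hn⟩, Finset.mem_univ _⟩
      refine ⟨Finset.univ.sup' hne z, ?_, fun i => ⟨?_, ?_⟩⟩
      · exact Finset.sup'_mem S hSjoin _ hne z (fun i _ => hzS i)
      · have h1 : z i ≤ Finset.univ.sup' hne z := Finset.le_sup' z (Finset.mem_univ i)
        have h2 := h1 i
        exact le_trans (hzlt i).le h2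
      · exact hle_xb _ (Finset.sup'_mem S hSjoin _ hne z (fun i _ => hzS i)) i
    choose y hyS hybnd using hseq
    have hy_tendsto : Filter.Tendsto y Filter.atTop (nhds xb) := by
      rw [tendsto_pi_nhds]
      intro i
      have hlo : Filter.Tendsto (fun k : ℕ => xb i - 1/(k+1 : ℝ)) Filter.atTop (nhds (xb i)) := by
        have h0 : Filter.Tendsto (fun k : ℕ => 1/(k+1 : ℝ)) Filter.atTop (nhds 0) :=
          tendsto_one_div_add_atTop_nhds_zero_nat
        have := Filter.Tendsto.sub (tendsto_const_nhds (x := xb i)) h0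
        simpa using this
      exact tendsto_of_tendsto_of_tendsto_of_le_of_le hlo tendsto_const_nhds
        (fun k => (hybnd k i).1) (fun k => (hybnd k i).2)
    exact hSclosed.mem_of_tendsto hy_tendsto (Filter.Eventually.of_forall hyS)
  have hxbpos : ∀ i, 0 < xb i := fun i => lt_of_lt_of_le (ha i) (hxb_ge_a i)
  -- exactness
  have hexact : Pc Y Vs xb = P := by
    funext i
    refine le_antisymm ?_ (hxbS.2.2 i)
    by_contra hlt
    push_neg at hlt
    set δ : ℝ := Pc Y Vs xb i - P i with hδdef
    have hδpos : 0 < δ := by linarith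
    set c1 : ℝ := (Y *ᵥ Vs) i - (Y *ᵥ xb) i - xb i * Y i i with hc1def
    have hc2 : 0 < Y i i := diag_pos hPD i
    set η : ℝ := min 1 (δ/(|c1| + Y i i + 1)) with hηdef
    have habsnn : (0:ℝ) ≤ |c1| := abs_nonneg c1
    have hηpos : 0 < η := lt_min one_pos (by positivity)
    have hη1 : η ≤ 1 := min_le_left _ _
    have hη2 : η ≤ δ/(|c1| + Y i i + 1) := min_le_right _ _
    have hsing : ∀ j, 0 ≤ (Pi.single i 1 : Fin n → ℝ) j := by
      intro j
      rcases eq_or_ne j i with rfl | h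
      · simp
      · simp [Pi.single_eq_of_ne h]
    set x' : Fin n → ℝ := xb + η • (Pi.single i 1 : Fin n → ℝ) with hx'def
    have hx'S : x' ∈ S := by
      refine ⟨fun j => ?_, fun j => ?_, fun j => ?_⟩
      · have : xb j ≤ x' j := by
          simp only [hx'def, Pi.add_apply, Pi.smul_apply, smul_eq_mul]
          nlinarith [hsing j, hηpos.le]
        exact (hxb_ge_a j).trans this
      · rcases eq_or_ne j i with rfl | h
        · simp only [hx'def, Pi.add_apply, Pi.smul_apply, smul_eq_mul, Pi.single_eq_same]
          have := hxb_leR j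
          linarith
        · simp only [hx'def, Pi.add_apply, Pi.smul_apply, smul_eq_mul, Pi.single_eq_of_ne h]
          have := hxbS.2.1 j
          linarith
      · rw [hx'def, pc_expand]
        rcases eq_or_ne j i with rfl | h
        · rw [Pi.single_eq_same, mulVec_single_apply]
          have hD : (0:ℝ) ≤ |c1| + Y j j := by linarith
          have h6 : η * (|c1| + Y j j) ≤ (δ/(|c1| + Y j j + 1)) * (|c1| + Y j j) :=
            mul_le_mul_of_nonneg_right hη2 hD
          have h7 : (δ/(|c1| + Y j j + 1)) * (|c1| + Y j j) < δ := by
            rw [div_mul_eq_mul_div, div_lt_iff₀ (by positivity)]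
            nlinarith
          have h8 : -(η * |c1|) ≤ η * c1 := by
            nlinarith [neg_abs_le c1, hηpos.le]
          have hηη : η * η ≤ η := by nlinarith
          have h9 : η^2 * Y j j ≤ η * Y j j := by
            rw [sq]
            exact mul_le_mul_of_nonneg_right hηη hc2.le
          have hPceq : P j + δ = Pc Y Vs xb j := by rw [hδdef]; ring
          nlinarith
        · rw [Pi.single_eq_of_ne h, mulVec_single_apply]
          have h10 : 0 ≤ -(η * (xb j * Y j i)) := by
            have hYji : Y j i ≤ 0 := hZ j i h
            have hxbj : 0 ≤ xb j := (hxbpos j).le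
            have hA : xb j * Y j i ≤ 0 := mul_nonpos_iff.2 (Or.inl ⟨hxbj, hYji⟩)
            have := mul_nonneg hηpos.le (neg_nonneg.2 hA)
            nlinarith
          have h11 := hxbS.2.2 j
          nlinarith
    have hcontr := hle_xb x' hx'S i
    have : x' i = xb i + η := by
      simp [hx'def, Pi.single_eq_same]
    rw [this] at hcontr
    linarith
  refine ⟨xb, hxbpos, hexact, ?_⟩
  intro z hz hzsub i
  have hzR : ∀ j, z j ≤ R := hbound z (fun j => (hz j).le) hzsub
  have hzaS : (z ⊔ a) ∈ S := by
    refine ⟨fun j => le_max_right _ _, fun j => ?_, ?_⟩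
    · have h1 := hzR j
      have h2 : a j ≤ R + 1 := haS.2.1 j
      exact max_le (by linarith) h2
    · exact join_subsol hZ (fun j => (hz j).le) (fun j => (ha j).le) hzsub hsuba
  calc z i ≤ max (z i) (a i) := le_max_left _ _
    _ ≤ xb i := hle_xb _ hzaS i


variable {n : ℕ}

/-- Lemma E: a nonnegative subsolution can be turned into a strictly positive one. -/
lemma lift_subsol {Y : Matrix (Fin n) (Fin n) ℝ} {Vs : Fin n → ℝ}
    (hPD : Y.PosDef) (hZ : IsZmat Y) (hirr : IsIrred Y)
    (hInn : ∀ i, 0 ≤ (Y *ᵥ Vs) i) (hIne : Y *ᵥ Vs ≠ 0) :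
    ∀ (N : ℕ) (a P : Fin n → ℝ), (∀ i, 0 ≤ a i) → (∀ i, P i ≤ Pc Y Vs a i) →
      (Finset.univ.filter (fun i => a i = 0)).card ≤ N →
      ∃ a' : Fin n → ℝ, (∀ i, 0 < a' i) ∧ ∀ i, P i ≤ Pc Y Vs a' i := by
  classical
  intro N
  induction N with
  | zero =>
    intro a P ha hsub hcard
    refine ⟨a, fun i => ?_, hsub⟩
    rcases (ha i).lt_or_eq with h | h
    · exact h
    · exfalso
      have : i ∈ Finset.univ.filter (fun i => a i = 0) :=
        Finset.mem_filter.2 ⟨Finset.mem_univ i, h.symm⟩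
      have := Finset.card_pos.2 ⟨i, this⟩
      omega
  | succ N ih =>
    intro a P ha hsub hcard
    set Z : Finset (Fin n) := Finset.univ.filter (fun i => a i = 0) with hZdef
    rcases Finset.eq_empty_or_nonempty Z with hZe | hZne
    · -- no zeros: a is already positive
      refine ⟨a, fun i => ?_, hsub⟩
      rcases (ha i).lt_or_eq with h | h
      · exact h
      · exfalso
        have : i ∈ Z := Finset.mem_filter.2 ⟨Finset.mem_univ i, h.symm⟩
        rw [hZe] at this
        exact absurd this (Finset.notMem_empty i)
    · -- there are zeros
      set c : Fin n → ℝ := fun j => (Y *ᵥ Vs) j - (Y *ᵥ a) j with hcdef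
      have hYa_nonpos : ∀ j ∈ Z, (Y *ᵥ a) j ≤ 0 := by
        intro j hjZ
        have hja : a j = 0 := (Finset.mem_filter.1 hjZ).2
        show ∑ k, Y j k * a k ≤ 0
        apply Finset.sum_nonpos
        intro k _
        rcases eq_or_ne k j with rfl | hkj
        · rw [hja]; simp
        · exact mul_nonpos_iff.2 (Or.inr ⟨hZ j k (Ne.symm hkj), ha k⟩)
      have hcnn : ∀ j ∈ Z, 0 ≤ c j := by
        intro j hjZ
        have := hYa_nonpos j hjZ
        have := hInn j
        rw [hcdef]
        dsimp only
        linarith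
      set Zp : Finset (Fin n) := Z.filter (fun j => 0 < c j) with hZpdef
      have hZpne : Zp.Nonempty := by
        by_contra hZpe
        rw [Finset.not_nonempty_iff_eq_empty] at hZpe
        have hc0 : ∀ j ∈ Z, c j = 0 := by
          intro j hjZ
          rcases (hcnn j hjZ).lt_or_eq with h | h
          · exfalso
            have : j ∈ Zp := Finset.mem_filter.2 ⟨hjZ, h⟩
            rw [hZpe] at this
            exact absurd this (Finset.notMem_empty j)
          · exact h.symm
        -- each j in Z : I*_j = 0 and Y j k = 0 for k ∉ Z
        have hkey : ∀ j ∈ Z, (Y *ᵥ Vs) j = 0 ∧ ∀ k, k ∉ Z → Y j k = 0 := by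
          intro j hjZ
          have h1 : (Y *ᵥ a) j = (Y *ᵥ Vs) j := by
            have := hc0 j hjZ
            rw [hcdef] at this
            dsimp only at this
            linarith
          have h2 : (Y *ᵥ a) j ≤ 0 := hYa_nonpos j hjZ
          have h3 : (Y *ᵥ Vs) j = 0 := le_antisymm (h1 ▸ h2) (hInn j)
          refine ⟨h3, ?_⟩
          -- the sum of nonpositive terms is zero
          have h4 : (Y *ᵥ a) j = 0 := by rw [h1, h3]
          have hja : a j = 0 := (Finset.mem_filter.1 hjZ).2
          have h5 : ∀ k ∈ Finset.univ, Y j k * a k ≤ 0 := by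
            intro k _
            rcases eq_or_ne k j with rfl | hkj
            · rw [hja]; simp
            · exact mul_nonpos_iff.2 (Or.inr ⟨hZ j k (Ne.symm hkj), ha k⟩)
          have h6 := (Finset.sum_eq_zero_iff_of_nonpos h5).1 h4
          intro k hkZ
          have h7 := h6 k (Finset.mem_univ k)
          have hak : 0 < a k := by
            rcases (ha k).lt_or_eq with h | h
            · exact h
            · exact absurd (Finset.mem_filter.2 ⟨Finset.mem_univ k, h.symm⟩) hkZ
          rcases mul_eq_zero.1 h7 with h | h
          · exact h
          · exact absurd h hak.ne'
        rcases eq_or_ne Z Finset.univ with hZu | hZu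
        · -- all coordinates zero: Y *ᵥ Vs = 0, contradiction
          apply hIne
          funext j
          exact (hkey j (hZu ▸ Finset.mem_univ j)).1
        · obtain ⟨j, hjZ, k, hkZ, hYjk⟩ := hirr Z hZne hZu
          have hkZ' : k ∉ Z := by simpa [Finset.mem_compl] using hkZ
          exact hYjk ((hkey j hjZ).2 k hkZ')
      -- build the improved point
      have hdiag : ∀ j, 0 < Y j j := diag_pos hPD
      set δ : ℝ := Zp.inf' hZpne (fun j => c j / (2 * Y j j)) with hδdef
      have hδpos : 0 < δ := by
        rw [hδdef, Finset.lt_inf'_iff]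
        intro j hjZp
        have hcj : 0 < c j := (Finset.mem_filter.1 hjZp).2
        exact div_pos hcj (by linarith [hdiag j])
      set χ : Fin n → ℝ := fun k => if k ∈ Zp then δ else 0 with hχdef
      set a' : Fin n → ℝ := a + χ with ha'def
      have hχnn : ∀ k, 0 ≤ χ k := by
        intro k
        rw [hχdef]
        by_cases hk : k ∈ Zp <;> simp [hk, hδpos.le]
      have ha'nn : ∀ k, 0 ≤ a' k := by
        intro k
        rw [ha'def]
        exact add_nonneg (ha k) (hχnn k)
      have hYχ : ∀ j, j ∉ Zp → (Y *ᵥ χ) j ≤ 0 := by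
        intro j hj
        show ∑ k, Y j k * χ k ≤ 0
        apply Finset.sum_nonpos
        intro k _
        rcases eq_or_ne k j with rfl | hkj
        · have : χ k = 0 := by rw [hχdef]; simp [hj]
          rw [this]; simp
        · exact mul_nonpos_iff.2 (Or.inr ⟨hZ j k (Ne.symm hkj), hχnn k⟩)
      have hPle0 : ∀ j ∈ Z, P j ≤ 0 := by
        intro j hjZ
        have hja : a j = 0 := (Finset.mem_filter.1 hjZ).2
        have := hsub j
        rw [pc_apply, hja] at this
        linarith
      have hsub' : ∀ i, P i ≤ Pc Y Vs a' i := by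
        intro i
        have hYa' : (Y *ᵥ a') i = (Y *ᵥ a) i + (Y *ᵥ χ) i := by
          rw [ha'def, Matrix.mulVec_add]
          rfl
        by_cases hiZ : i ∈ Z
        · by_cases hiZp : i ∈ Zp
          · -- raised coordinate
            have ha'i : a' i = δ := by
              have hai : a i = 0 := (Finset.mem_filter.1 hiZ).2
              rw [ha'def]
              show a i + χ i = δ
              rw [hai, hχdef]
              simp [hiZp]
            have hYχi : (Y *ᵥ χ) i ≤ δ * Y i i := by
              show ∑ k, Y i k * χ k ≤ δ * Y i i
              have hsplit := Finset.sum_eq_sum_sdiff_singleton_add (Finset.mem_univ i)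
                (fun k => Y i k * χ k)
              rw [hsplit]
              have hχi : χ i = δ := by rw [hχdef]; simp [hiZp]
              have h1 : ∑ k ∈ Finset.univ \ {i}, Y i k * χ k ≤ 0 := by
                apply Finset.sum_nonpos
                intro k hk
                have hki : k ≠ i := by
                  rcases Finset.mem_sdiff.1 hk with ⟨_, h2⟩
                  simpa using h2
                exact mul_nonpos_iff.2 (Or.inr ⟨hZ i k (Ne.symm hki), hχnn k⟩)
              rw [hχi]
              nlinarith [h1]
            have hδc : δ ≤ c i / (2 * Y i i) := Finset.inf'_le _ hiZp
            have hci : 0 < c i := (Finset.mem_filter.1 hiZp).2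
            have hYii := hdiag i
            have hkey : c i - (Y *ᵥ χ) i ≥ c i / 2 := by
              have h2 : δ * Y i i ≤ (c i / (2 * Y i i)) * Y i i :=
                mul_le_mul_of_nonneg_right hδc hYii.le
              have h3 : (c i / (2 * Y i i)) * Y i i = c i / 2 := by
                field_simp
              linarith [hYχi]
            have hP0 := hPle0 i hiZ
            rw [pc_apply, ha'i, hYa']
            have hc_eq : (Y *ᵥ Vs) i - (Y *ᵥ a) i = c i := by rw [hcdef]
            have : (Y *ᵥ Vs) i - ((Y *ᵥ a) i + (Y *ᵥ χ) i) = c i - (Y *ᵥ χ) i := by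
              rw [← hc_eq]; ring
            rw [this]
            nlinarith
          · -- still-zero coordinate
            have ha'i : a' i = 0 := by
              have hai : a i = 0 := (Finset.mem_filter.1 hiZ).2
              rw [ha'def]
              show a i + χ i = 0
              rw [hai, hχdef]
              simp [hiZp]
            rw [pc_apply, ha'i]
            simpa using hPle0 i hiZ
        · -- originally positive coordinate
          have hiZp : i ∉ Zp := fun h => hiZ (Finset.mem_filter.1 h).1
          have ha'i : a' i = a i := by
            rw [ha'def]
            show a i + χ i = a i
            rw [hχdef]
            simp [hiZp]
          have hYχi := hYχ i hiZp
          rw [pc_apply, ha'i, hYa']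
          calc P i ≤ Pc Y Vs a i := hsub i
            _ = a i * ((Y *ᵥ Vs) i - (Y *ᵥ a) i) := pc_apply _ _ _ _
            _ ≤ a i * ((Y *ᵥ Vs) i - ((Y *ᵥ a) i + (Y *ᵥ χ) i)) := by
                apply mul_le_mul_of_nonneg_left _ (ha i)
                linarith
      -- the zero set strictly decreased
      have hZ' : Finset.univ.filter (fun k => a' k = 0) = Z \ Zp := by
        ext k
        simp only [Finset.mem_filter, Finset.mem_univ, true_and, Finset.mem_sdiff]
        constructor
        · intro h0
          have hak : a k = 0 := by
            have := hχnn k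
            have := ha k
            have : a k + χ k = 0 := h0
            linarith [hχnn k, ha k]
          refine ⟨Finset.mem_filter.2 ⟨Finset.mem_univ k, hak⟩, ?_⟩
          intro hkZp
          have : χ k = δ := by rw [hχdef]; simp [hkZp]
          have h1 : a k + χ k = 0 := h0
          rw [hak, this] at h1
          linarith
        · rintro ⟨hkZ, hkZp⟩
          have hak : a k = 0 := (Finset.mem_filter.1 hkZ).2
          have hχk : χ k = 0 := by rw [hχdef]; simp [hkZp]
          show a k + χ k = 0
          rw [hak, hχk]; ring
      have hZpsub : Zp ⊆ Z := Finset.filter_subset _ _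
      have hcard' : (Finset.univ.filter (fun k => a' k = 0)).card ≤ N := by
        rw [hZ', Finset.card_sdiff_of_subset hZpsub]
        have h1 : 1 ≤ Zp.card := Finset.card_pos.2 hZpne
        omega
      exact ih a' P ha'nn hsub' hcard'


variable {n : ℕ}

lemma posdef_of_quad {M : Matrix (Fin n) (Fin n) ℝ} (hsym : Mᵀ = M)
    (h : ∀ x : Fin n → ℝ, x ≠ 0 → 0 < x ⬝ᵥ (M *ᵥ x)) : M.PosDef := by
  refine Matrix.PosDef.of_dotProduct_mulVec_pos (isHermitian_of_symm hsym) fun x hx => ?_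
  simpa using h x hx

lemma quad_hmat {Y : Matrix (Fin n) (Fin n) ℝ} (hY : Yᵀ = Y) (l x : Fin n → ℝ) :
    x ⬝ᵥ (hmat Y l *ᵥ x) = ∑ i, l i * x i * (Y *ᵥ x) i := by
  have h1 : x ⬝ᵥ (hmat Y l *ᵥ x) =
      ∑ i, x i * ((1/2) * (l i * (Y *ᵥ x) i + (Y *ᵥ (fun j => l j * x j)) i)) := by
    apply Finset.sum_congr rfl
    intro i _
    rw [hmat_mulVec]
  have h2 : x ⬝ᵥ (Y *ᵥ (fun j => l j * x j)) = (fun j => l j * x j) ⬝ᵥ (Y *ᵥ x) :=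
    sym_dot hY _ _
  have h3 : x ⬝ᵥ (Y *ᵥ (fun j => l j * x j)) = ∑ i, x i * (Y *ᵥ (fun j => l j * x j)) i := rfl
  have h4 : (fun j => l j * x j) ⬝ᵥ (Y *ᵥ x) = ∑ i, l i * x i * (Y *ᵥ x) i := by
    apply Finset.sum_congr rfl
    intro i _
    ring
  rw [h1]
  have h5 : ∑ i, x i * ((1/2) * (l i * (Y *ᵥ x) i + (Y *ᵥ (fun j => l j * x j)) i))
      = (1/2) * (∑ i, l i * x i * (Y *ᵥ x) i) + (1/2) * (∑ i, x i * (Y *ᵥ (fun j => l j * x j)) i) := by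
    rw [Finset.mul_sum, Finset.mul_sum, ← Finset.sum_add_distrib]
    apply Finset.sum_congr rfl
    intro i _
    ring
  rw [h5]
  have h6 : ∑ i, x i * (Y *ᵥ (fun j => l j * x j)) i = ∑ i, l i * x i * (Y *ᵥ x) i := by
    rw [← h3, h2, h4]
  rw [h6]
  ring

lemma hmat_phiv {Y : Matrix (Fin n) (Fin n) ℝ} {Vs : Fin n → ℝ} {l : Fin n → ℝ}
    (hlpd : (hmat Y l).PosDef) :
    hmat Y l *ᵥ phiv Y Vs l = fun i => (1/2) * (l i * (Y *ᵥ Vs) i) := by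
  have hunit : IsUnit (hmat Y l).det := (Matrix.isUnit_iff_isUnit_det _).1 hlpd.isUnit
  have h1 : hmat Y l * (hmat Y l)⁻¹ = 1 := Matrix.mul_nonsing_inv _ hunit
  have hcan : ∀ w : Fin n → ℝ, hmat Y l *ᵥ ((hmat Y l)⁻¹ *ᵥ w) = w := by
    intro w
    rw [Matrix.mulVec_mulVec, h1, Matrix.one_mulVec]
  rw [phiv, Matrix.mulVec_smul, hcan]
  funext i
  rw [Pi.smul_apply, Matrix.mulVec_diagonal, smul_eq_mul]

lemma phiv_eq {Y : Matrix (Fin n) (Fin n) ℝ} {Vs : Fin n → ℝ} {l x : Fin n → ℝ}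
    (hlpd : (hmat Y l).PosDef)
    (hx : hmat Y l *ᵥ x = fun i => (1/2) * (l i * (Y *ᵥ Vs) i)) : phiv Y Vs l = x := by
  have hunit : IsUnit (hmat Y l).det := (Matrix.isUnit_iff_isUnit_det _).1 hlpd.isUnit
  have h1 : (hmat Y l)⁻¹ * hmat Y l = 1 := Matrix.nonsing_inv_mul _ hunit
  have h2 : Matrix.diagonal l *ᵥ (Y *ᵥ Vs) = (2:ℝ) • (hmat Y l *ᵥ x) := by
    rw [hx]
    funext i
    rw [Matrix.mulVec_diagonal]
    simp only [Pi.smul_apply, smul_eq_mul]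
    ring
  have hcan : ∀ w : Fin n → ℝ, (hmat Y l)⁻¹ *ᵥ (hmat Y l *ᵥ w) = w := by
    intro w
    rw [Matrix.mulVec_mulVec, h1, Matrix.one_mulVec]
  rw [phiv, h2, Matrix.mulVec_smul, hcan]
  funext i
  simp only [Pi.smul_apply, smul_eq_mul]
  ring

/-- the easy inclusion: every value of `Pc` satisfies each half-space constraint. -/
lemma pc_le_qnorm {Y : Matrix (Fin n) (Fin n) ℝ} {Vs : Fin n → ℝ} (hY : Yᵀ = Y)
    {l : Fin n → ℝ} (hlpd : (hmat Y l).PosDef) (x : Fin n → ℝ) :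
    l ⬝ᵥ Pc Y Vs x ≤ qnorm Y l (phiv Y Vs l) := by
  set H := hmat Y l with hHdef
  set φ := phiv Y Vs l with hφdef
  have hHsym : Hᵀ = H := hmat_transpose hY l
  have h1 : l ⬝ᵥ Pc Y Vs x
      = (∑ i, l i * x i * (Y *ᵥ Vs) i) - (∑ i, l i * x i * (Y *ᵥ x) i) := by
    rw [← Finset.sum_sub_distrib]
    apply Finset.sum_congr rfl
    intro i _
    rw [pc_apply]
    ring
  have h2 : x ⬝ᵥ (H *ᵥ x) = ∑ i, l i * x i * (Y *ᵥ x) i := quad_hmat hY l x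
  have h3 : H *ᵥ φ = fun i => (1/2) * (l i * (Y *ᵥ Vs) i) := hmat_phiv hlpd
  have h4 : x ⬝ᵥ (H *ᵥ φ) = (1/2) * ∑ i, l i * x i * (Y *ᵥ Vs) i := by
    rw [h3]
    show ∑ i, x i * ((1/2) * (l i * (Y *ᵥ Vs) i)) = _
    rw [Finset.mul_sum]
    apply Finset.sum_congr rfl
    intro i _
    ring
  have h5 : φ ⬝ᵥ (H *ᵥ x) = x ⬝ᵥ (H *ᵥ φ) := sym_dot hHsym φ x
  have h6 : 0 ≤ (x - φ) ⬝ᵥ (H *ᵥ (x - φ)) := by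
    have := hlpd.posSemidef.dotProduct_mulVec_nonneg (x - φ)
    simpa using this
  rw [Matrix.mulVec_sub, dotProduct_sub, sub_dotProduct,
    sub_dotProduct] at h6
  show l ⬝ᵥ Pc Y Vs x ≤ φ ⬝ᵥ (H *ᵥ φ)
  rw [h1]
  linarith [h6, h5, h4, h2]


variable {n : ℕ}

lemma maxsol_A (hn : 1 ≤ n) {Y : Matrix (Fin n) (Fin n) ℝ} {Vs : Fin n → ℝ}
    (hPD : Y.PosDef) (hZ : IsZmat Y) (hirr : IsIrred Y)
    {Q xb : Fin n → ℝ} (hxbpos : ∀ i, 0 < xb i) (hex : Pc Y Vs xb = Q)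
    (hmax : ∀ z, (∀ i, 0 < z i) → (∀ i, Q i ≤ Pc Y Vs z i) → ∀ i, z i ≤ xb i) :
    ∃ (μ : ℝ) (w : Fin n → ℝ), (∀ i, 0 < w i) ∧
      (Y - Matrix.diagonal (fun i => ((Y *ᵥ Vs) i - (Y *ᵥ xb) i) / xb i)) *ᵥ w = μ • w ∧
      (∀ x : Fin n → ℝ, μ * (x ⬝ᵥ x) ≤
        x ⬝ᵥ ((Y - Matrix.diagonal (fun i => ((Y *ᵥ Vs) i - (Y *ᵥ xb) i) / xb i)) *ᵥ x)) ∧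
      0 ≤ μ := by
  classical
  set g : Fin n → ℝ := fun i => ((Y *ᵥ Vs) i - (Y *ᵥ xb) i) / xb i with hgdef
  set A : Matrix (Fin n) (Fin n) ℝ := Y - Matrix.diagonal g with hAdef
  have hY := transpose_eq hPD
  have hAsym : Aᵀ = A := by
    rw [hAdef, Matrix.transpose_sub, hY, Matrix.diagonal_transpose]
  have hAZ : IsZmat A := by
    intro i j hij
    rw [hAdef, Matrix.sub_apply, Matrix.diagonal_apply_ne _ hij]
    simpa using hZ i j hij
  have hAapp : ∀ i j, i ≠ j → A i j = Y i j := by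
    intro i j hij
    rw [hAdef, Matrix.sub_apply, Matrix.diagonal_apply_ne _ hij, sub_zero]
  have hAirr : IsIrred A := by
    intro α hne huniv
    obtain ⟨i, hi, j, hj, hYij⟩ := hirr α hne huniv
    have hij : i ≠ j := by
      intro h
      rw [h] at hi
      exact (Finset.mem_compl.1 hj) hi
    exact ⟨i, hi, j, hj, by rw [hAapp i j hij]; exact hYij⟩
  obtain ⟨μ, w, hwpos, hweig, hwlow⟩ := perron hn A hAsym hAZ hAirr
  refine ⟨μ, w, hwpos, hweig, hwlow, ?_⟩
  by_contra hμ
  push_neg at hμ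
  -- push along the Perron direction to contradict maximality
  have hkey : ∀ i, w i * ((Y *ᵥ Vs) i - (Y *ᵥ xb) i) - xb i * (Y *ᵥ w) i = -μ * (xb i * w i) := by
    intro i
    have h1 : (A *ᵥ w) i = (Y *ᵥ w) i - g i * w i := by
      rw [hAdef, Matrix.sub_mulVec]
      simp [Matrix.mulVec_diagonal]
    have h2 : (A *ᵥ w) i = μ * w i := by rw [hweig]; simp
    have h3 : xb i * g i = (Y *ᵥ Vs) i - (Y *ᵥ xb) i := by
      rw [hgdef]
      field_simp [(hxbpos i).ne']
    have h4 : (Y *ᵥ w) i - g i * w i = μ * w i := by rw [← h1, h2]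
    rw [← h3]
    linear_combination (-(xb i)) * h4
  set η : ℝ := Finset.univ.inf' (Finset.univ_nonempty_iff.2 ⟨⟨0, hn⟩⟩)
    (fun i => (-μ) * (xb i * w i) / (|w i * (Y *ᵥ w) i| + 1)) with hηdef
  have hηpos : 0 < η := by
    rw [hηdef, Finset.lt_inf'_iff]
    intro i _
    have h1 : 0 < (-μ) * (xb i * w i) := by
      apply mul_pos (by linarith) (mul_pos (hxbpos i) (hwpos i))
    positivity
  set x' : Fin n → ℝ := xb + η • w with hx'def
  have hx'pos : ∀ i, 0 < x' i := by
    intro i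
    rw [hx'def]
    have : 0 < η * w i := mul_pos hηpos (hwpos i)
    show 0 < xb i + η * w i
    linarith [hxbpos i]
  have hx'sub : ∀ i, Q i ≤ Pc Y Vs x' i := by
    intro i
    rw [hx'def, pc_expand]
    have hη_le : η ≤ (-μ) * (xb i * w i) / (|w i * (Y *ᵥ w) i| + 1) :=
      Finset.inf'_le _ (Finset.mem_univ i)
    have habs : (0:ℝ) ≤ |w i * (Y *ᵥ w) i| := abs_nonneg _
    have h6 : η * (|w i * (Y *ᵥ w) i| + 1) ≤ (-μ) * (xb i * w i) := by
      rw [div_eq_mul_inv] at hη_le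
      have := mul_le_mul_of_nonneg_right hη_le (by positivity : (0:ℝ) ≤ |w i * (Y *ᵥ w) i| + 1)
      calc η * (|w i * (Y *ᵥ w) i| + 1) ≤
          (-μ) * (xb i * w i) * (|w i * (Y *ᵥ w) i| + 1)⁻¹ * (|w i * (Y *ᵥ w) i| + 1) := this
        _ = (-μ) * (xb i * w i) := by field_simp
    have h7 : η * (w i * (Y *ᵥ w) i) ≤ (-μ) * (xb i * w i) := by
      have h8 : η * (w i * (Y *ᵥ w) i) ≤ η * |w i * (Y *ᵥ w) i| := by
        apply mul_le_mul_of_nonneg_left (le_abs_self _) hηpos.le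
      nlinarith
    have h9 := hkey i
    have hexi : Pc Y Vs xb i = Q i := by rw [hex]
    nlinarith [sq_nonneg η, mul_le_mul_of_nonneg_left h7 hηpos.le]
  have hcontr := hmax x' hx'pos hx'sub ⟨0, hn⟩
  rw [hx'def] at hcontr
  have : 0 < η * w ⟨0, hn⟩ := mul_pos hηpos (hwpos _)
  have h11 : xb ⟨0, hn⟩ + η * w ⟨0, hn⟩ ≤ xb ⟨0, hn⟩ := hcontr
  linarith


variable {n : ℕ}

lemma hard_inclusion (hn : 1 ≤ n) {Y : Matrix (Fin n) (Fin n) ℝ} {Vs : Fin n → ℝ}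
    (hPD : Y.PosDef) (hZ : IsZmat Y) (hirr : IsIrred Y) (hVs : ∀ i, 0 < Vs i)
    (hInn : ∀ i, 0 ≤ (Y *ᵥ Vs) i) (hIne : Y *ᵥ Vs ≠ 0) (P : Fin n → ℝ)
    (hP : ∀ l ∈ Lam1 Y, l ⬝ᵥ P ≤ qnorm Y l (phiv Y Vs l)) :
    ∃ x, (∀ i, 0 < x i) ∧ Pc Y Vs x = P := by
  classical
  have hY := transpose_eq hPD
  have hPcVs : ∀ i, Pc Y Vs Vs i = 0 := by
    intro i
    rw [pc_apply]
    simp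
  set Pp : Fin n → ℝ := fun i => max (P i) 0 with hPpdef
  set Pm : Fin n → ℝ := fun i => max (-P i) 0 with hPmdef
  have hPpnn : ∀ i, 0 ≤ Pp i := fun i => le_max_right _ _
  have hPmnn : ∀ i, 0 ≤ Pm i := fun i => le_max_right _ _
  have hPdecomp : ∀ i, P i = Pp i - Pm i := by
    intro i
    rw [hPpdef, hPmdef]
    dsimp only
    rcases le_total (P i) 0 with h | h
    · rw [max_eq_right h, max_eq_left (by linarith)]
      ring
    · rw [max_eq_left h, max_eq_right (by linarith)]
      ring
  by_cases hPp0 : ∀ i, Pp i = 0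
  · -- P ≤ 0 : use Vs as subsolution directly
    have hsub : ∀ i, P i ≤ Pc Y Vs Vs i := by
      intro i
      rw [hPcVs i, hPdecomp i, hPp0 i]
      linarith [hPmnn i]
    obtain ⟨xb, h1, h2, _⟩ := sup_subsol hn hPD hZ hirr P Vs hVs hsub
    exact ⟨xb, h1, h2⟩
  push_neg at hPp0
  obtain ⟨i0, hi0⟩ := hPp0
  have hi0pos : 0 < Pp i0 := (hPpnn i0).lt_of_ne (Ne.symm hi0)
  set Q : ℝ → (Fin n → ℝ) := fun t => fun i => t * Pp i - Pm i with hQdef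
  set W : Set ℝ :=
    {t | t ∈ Set.Icc (0:ℝ) 1 ∧ ∃ a, (∀ i, 0 < a i) ∧ ∀ i, Q t i ≤ Pc Y Vs a i} with hWdef
  have h0W : (0:ℝ) ∈ W := by
    refine ⟨⟨le_refl _, zero_le_one⟩, Vs, hVs, fun i => ?_⟩
    rw [hPcVs i, hQdef]
    dsimp only
    linarith [hPmnn i]
  have hWne : W.Nonempty := ⟨0, h0W⟩
  have hWbdd : BddAbove W := ⟨1, fun t ht => ht.1.2⟩
  set tb : ℝ := sSup W with htbdef
  have htb0 : 0 ≤ tb := le_csSup hWbdd h0W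
  have htb1 : tb ≤ 1 := csSup_le hWne (fun t ht => ht.1.2)
  -- tb ∈ W by a compactness argument
  have htbW : tb ∈ W := by
    have hseq : ∀ k : ℕ, ∃ t, t ∈ W ∧ tb - 1/(k+1:ℝ) < t := by
      intro k
      have hk : (0:ℝ) < 1/(k+1:ℝ) := by positivity
      obtain ⟨t, htW, hlt⟩ := exists_lt_of_lt_csSup hWne (by linarith : tb - 1/(k+1:ℝ) < tb)
      exact ⟨t, htW, hlt⟩
    choose t htW htlt using hseq
    have htle : ∀ k, t k ≤ tb := fun k => le_csSup hWbdd (htW k)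
    choose a hapos hasub using fun k => (htW k).2
    obtain ⟨m, hm, hco⟩ := coercive hn hPD hZ hirr
    set Rb : ℝ := max 1 ((2/m) * ((1/(2*m)) * ((Y *ᵥ Vs) ⬝ᵥ (Y *ᵥ Vs)) + ∑ j, Pm j)) with hRbdef
    have hRb1 : (1:ℝ) ≤ Rb := le_max_left _ _
    have hbound : ∀ k i, a k i ≤ Rb := by
      intro k i
      have h1 := subsol_coord_bound hm hco (Q (t k)) (a k)
        (fun j => (hapos k j).le) (hasub k) i
      have h2 : -∑ j, Q (t k) j ≤ ∑ j, Pm j := by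
        have h3 : ∀ j, -Q (t k) j ≤ Pm j := by
          intro j
          rw [hQdef]
          dsimp only
          have := mul_nonneg (htW k).1.1 (hPpnn j)
          linarith
        calc -∑ j, Q (t k) j = ∑ j, -Q (t k) j := by rw [← Finset.sum_neg_distrib]
          _ ≤ ∑ j, Pm j := Finset.sum_le_sum fun j _ => h3 j
      have h4 : (2/m) * ((1/(2*m)) * ((Y *ᵥ Vs) ⬝ᵥ (Y *ᵥ Vs)) - ∑ j, Q (t k) j)
          ≤ (2/m) * ((1/(2*m)) * ((Y *ᵥ Vs) ⬝ᵥ (Y *ᵥ Vs)) + ∑ j, Pm j) := by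
        apply mul_le_mul_of_nonneg_left _ (by positivity : (0:ℝ) ≤ 2/m)
        linarith
      calc a k i ≤ max 1 ((2/m) * ((1/(2*m)) * ((Y *ᵥ Vs) ⬝ᵥ (Y *ᵥ Vs)) - ∑ j, Q (t k) j)) := h1
        _ ≤ Rb := max_le_max (le_refl 1) h4
    have hball : ∀ k, a k ∈ Metric.closedBall (0 : Fin n → ℝ) Rb := by
      intro k
      rw [Metric.mem_closedBall, dist_zero_right]
      refine (pi_norm_le_iff_of_nonneg (by linarith)).2 fun i => ?_
      rw [Real.norm_eq_abs, abs_of_pos (hapos k i)]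
      exact hbound k i
    obtain ⟨aL, _, φ, hφmono, hφtend⟩ :=
      tendsto_subseq_of_bounded Metric.isBounded_closedBall hball
    have httend : Filter.Tendsto t Filter.atTop (nhds tb) := by
      have hlo : Filter.Tendsto (fun k : ℕ => tb - 1/(k+1:ℝ)) Filter.atTop (nhds tb) := by
        have h0 : Filter.Tendsto (fun k : ℕ => 1/(k+1:ℝ)) Filter.atTop (nhds 0) :=
          tendsto_one_div_add_atTop_nhds_zero_nat
        have := Filter.Tendsto.sub (tendsto_const_nhds (x := tb)) h0
        simpa using this
      exact tendsto_of_tendsto_of_tendsto_of_le_of_le hlo tendsto_const_nhds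
        (fun k => (htlt k).le) htle
    have htφtend : Filter.Tendsto (t ∘ φ) Filter.atTop (nhds tb) :=
      httend.comp hφmono.tendsto_atTop
    have haLnn : ∀ i, 0 ≤ aL i := by
      intro i
      have h1 : Filter.Tendsto (fun k => a (φ k) i) Filter.atTop (nhds (aL i)) :=
        (tendsto_pi_nhds.1 hφtend) i
      exact ge_of_tendsto h1 (Filter.Eventually.of_forall fun k => (hapos (φ k) i).le)
    have hsubL : ∀ i, Q tb i ≤ Pc Y Vs aL i := by
      intro i
      have h1 : Filter.Tendsto (fun k => Pc Y Vs (a (φ k)) i) Filter.atTop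
          (nhds (Pc Y Vs aL i)) :=
        ((continuous_pc_apply Y Vs i).tendsto aL).comp hφtend
      have h2 : Filter.Tendsto (fun k => Q (t (φ k)) i) Filter.atTop (nhds (Q tb i)) := by
        rw [hQdef]
        dsimp only
        exact (htφtend.mul_const (Pp i)).sub tendsto_const_nhds
      exact le_of_tendsto_of_tendsto' h2 h1 (fun k => hasub (φ k) i)
    obtain ⟨a', ha'pos, ha'sub⟩ := lift_subsol hPD hZ hirr hInn hIne n aL (Q tb) haLnn hsubL
      (by calc (Finset.univ.filter (fun i => aL i = 0)).card
            ≤ Finset.univ.card := Finset.card_filter_le _ _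
          _ = n := by simp)
    exact ⟨⟨htb0, htb1⟩, a', ha'pos, ha'sub⟩
  -- if tb < 1 we derive a contradiction
  have htbeq : tb = 1 := by
    by_contra hne'
    have htblt : tb < 1 := lt_of_le_of_ne htb1 hne'
    obtain ⟨_, a, hapos, hasub⟩ := htbW
    obtain ⟨xb, hxbpos, hxbex, hxbmax⟩ := sup_subsol hn hPD hZ hirr (Q tb) a hapos hasub
    obtain ⟨μ, w, hwpos, hweig, hwlow, hμnn⟩ := maxsol_A hn hPD hZ hirr hxbpos hxbex hxbmax
    set g : Fin n → ℝ := fun i => ((Y *ᵥ Vs) i - (Y *ᵥ xb) i) / xb i with hgdef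
    set A : Matrix (Fin n) (Fin n) ℝ := Y - Matrix.diagonal g with hAdef
    have hne : (Finset.univ : Finset (Fin n)).Nonempty := ⟨⟨0, hn⟩, Finset.mem_univ _⟩
    have hAsym : Aᵀ = A := by
      rw [hAdef, Matrix.transpose_sub, hY, Matrix.diagonal_transpose]
    have hAentry : ∀ i, (A *ᵥ w) i = (Y *ᵥ w) i - g i * w i := by
      intro i
      rw [hAdef, Matrix.sub_mulVec]
      simp [Matrix.mulVec_diagonal]
    have hgxb : ∀ i, g i * xb i = (Y *ᵥ Vs) i - (Y *ᵥ xb) i := by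
      intro i
      rw [hgdef]
      field_simp [(hxbpos i).ne']
    rcases hμnn.eq_or_lt with hμ0 | hμpos
    · -- μ = 0 : construct a separating λ in Λ₁ and contradict the strict inequality
      have hA0 : A *ᵥ w = 0 := by rw [hweig, ← hμ0, zero_smul]
      have hYw : ∀ i, (Y *ᵥ w) i = g i * w i := by
        intro i
        have h1 := hAentry i
        rw [hA0] at h1
        have h2 : (0 : Fin n → ℝ) i = 0 := rfl
        rw [h2] at h1
        linarith
      set σ : ℝ := ∑ j, w j / xb j with hσdef
      have hσpos : 0 < σ :=
        Finset.sum_pos (fun j _ => div_pos (hwpos j) (hxbpos j)) hne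
      set l : Fin n → ℝ := fun i => (w i / xb i) / σ with hldef
      have hlpos : ∀ i, 0 < l i := fun i => div_pos (div_pos (hwpos i) (hxbpos i)) hσpos
      have hlsum : ∑ i, l i = 1 := by
        rw [hldef, ← Finset.sum_div, ← hσdef, div_self hσpos.ne']
      have hlxb : ∀ i, l i * xb i = w i / σ := by
        intro i
        rw [hldef]
        dsimp only
        rw [div_mul_eq_mul_div, div_mul_cancel₀ _ (hxbpos i).ne']
      have hHxb : hmat Y l *ᵥ xb = fun i => (1/2) * (l i * (Y *ᵥ Vs) i) := by
        funext i
        rw [hmat_mulVec]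
        have h1 : (fun j => l j * xb j) = (fun j => w j / σ) := funext hlxb
        rw [h1]
        have h2 : (Y *ᵥ (fun j => w j / σ)) i = (Y *ᵥ w) i / σ := by
          show ∑ j, Y i j * (w j / σ) = (∑ j, Y i j * w j) / σ
          rw [Finset.sum_div]
          apply Finset.sum_congr rfl
          intro j _
          ring
        rw [h2, hYw i]
        have h3 : g i * w i / σ = l i * (g i * xb i) := by
          rw [hldef]
          field_simp [(hxbpos i).ne']
        rw [h3, hgxb i]
        ring
      have hHnn : ∀ i, 0 ≤ (hmat Y l *ᵥ xb) i := by
        intro i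
        rw [hHxb]
        have := mul_nonneg (hlpos i).le (hInn i)
        positivity
      have hHsym := hmat_transpose hY l
      have hHZ := hmat_zmat hZ (fun i => (hlpos i).le)
      have hHirr := hmat_irred hirr hlpos
      obtain ⟨hquadnn, hker⟩ := zmat_action hn (hmat Y l) hHsym hHZ hHirr xb hxbpos hHnn
      by_cases hEx : ∃ v, v ≠ 0 ∧ v ⬝ᵥ (hmat Y l *ᵥ v) ≤ 0
      · have h0 := hker hEx
        apply hIne
        funext i
        rw [hHxb] at h0
        have h1 := congrFun h0 i
        have h2 : (0 : Fin n → ℝ) i = 0 := rfl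
        rw [h2] at h1
        have h3 := hlpos i
        show (Y *ᵥ Vs) i = 0
        by_contra h4
        have h5 : (1/2 : ℝ) * (l i * (Y *ᵥ Vs) i) ≠ 0 := by
          apply mul_ne_zero (by norm_num)
          exact mul_ne_zero h3.ne' h4
        exact h5 h1
      · push_neg at hEx
        have hHpd : (hmat Y l).PosDef :=
          posdef_of_quad hHsym (fun v hv => hEx v hv)
        have hlmem : l ∈ Lam1 Y := ⟨hHpd, hlpos, hlsum⟩
        have hphi : phiv Y Vs l = xb := phiv_eq hHpd hHxb
        have hPle := hP l hlmem
        rw [hphi] at hPle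
        have hqv : qnorm Y l xb = (1/2) * ∑ i, l i * xb i * (Y *ᵥ Vs) i := by
          show xb ⬝ᵥ (hmat Y l *ᵥ xb) = _
          rw [hHxb]
          show ∑ i, xb i * ((1/2) * (l i * (Y *ᵥ Vs) i)) = _
          rw [Finset.mul_sum]
          apply Finset.sum_congr rfl
          intro i _
          ring
        have hquad2 : xb ⬝ᵥ (hmat Y l *ᵥ xb) = ∑ i, l i * xb i * (Y *ᵥ xb) i :=
          quad_hmat hY l xb
        have hsum_eq : ∑ i, l i * xb i * (Y *ᵥ xb) i
            = (1/2) * ∑ i, l i * xb i * (Y *ᵥ Vs) i := by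
          rw [← hquad2]
          exact hqv
        have hlQ : l ⬝ᵥ Q tb = (1/2) * ∑ i, l i * xb i * (Y *ᵥ Vs) i := by
          have h1 : l ⬝ᵥ Q tb = l ⬝ᵥ Pc Y Vs xb := by rw [hxbex]
          rw [h1]
          have h2 : l ⬝ᵥ Pc Y Vs xb
              = ∑ i, (l i * xb i * (Y *ᵥ Vs) i - l i * xb i * (Y *ᵥ xb) i) := by
            apply Finset.sum_congr rfl
            intro i _
            rw [pc_apply]
            ring
          rw [h2, Finset.sum_sub_distrib, hsum_eq]
          ring
        have hlPp : 0 < l ⬝ᵥ Pp := by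
          apply Finset.sum_pos' (fun i _ => mul_nonneg (hlpos i).le (hPpnn i))
          exact ⟨i0, Finset.mem_univ i0, mul_pos (hlpos i0) hi0pos⟩
        have hrel : l ⬝ᵥ P = l ⬝ᵥ Q tb + (1-tb) * (l ⬝ᵥ Pp) := by
          show ∑ i, l i * P i = (∑ i, l i * Q tb i) + (1-tb) * ∑ i, l i * Pp i
          rw [Finset.mul_sum, ← Finset.sum_add_distrib]
          apply Finset.sum_congr rfl
          intro i _
          rw [hPdecomp i, hQdef]
          dsimp only
          ring
        rw [hrel, hlQ] at hPle
        rw [hqv] at hPle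
        nlinarith [mul_pos (by linarith : (0:ℝ) < 1 - tb) hlPp]
    · -- μ > 0 : A is positive definite, push t beyond tb
      have hApd : A.PosDef := posdef_of_quad hAsym
        (fun x hx => lt_of_lt_of_le (mul_pos hμpos (dot_self_pos hx)) (hwlow x))
      have hunit : IsUnit A.det := (Matrix.isUnit_iff_isUnit_det _).1 hApd.isUnit
      set rhs : Fin n → ℝ := fun i => -((Pp i + 1) / xb i) with hrhsdef
      set d : Fin n → ℝ := A⁻¹ *ᵥ rhs with hddef
      have hAd : A *ᵥ d = rhs := by
        rw [hddef, Matrix.mulVec_mulVec, Matrix.mul_nonsing_inv _ hunit, Matrix.one_mulVec]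
      have hAdentry : ∀ i, (A *ᵥ d) i = (Y *ᵥ d) i - g i * d i := by
        intro i
        rw [hAdef, Matrix.sub_mulVec]
        simp [Matrix.mulVec_diagonal]
      have hkey : ∀ i, d i * ((Y *ᵥ Vs) i - (Y *ᵥ xb) i) - xb i * (Y *ᵥ d) i = Pp i + 1 := by
        intro i
        have h1 : (A *ᵥ d) i = rhs i := by rw [hAd]
        rw [hAdentry i] at h1
        have h2 : rhs i = -((Pp i + 1) / xb i) := rfl
        rw [h2] at h1
        have h3 : xb i * ((Y *ᵥ d) i - g i * d i) = -(Pp i + 1) := by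
          rw [h1]
          field_simp [(hxbpos i).ne']
        rw [← hgxb i]
        linear_combination -h3
      set K : ℝ := Finset.univ.sup' hne (fun i => |d i * (Y *ᵥ d) i|) with hKdef
      have hK0 : 0 ≤ K := by
        refine le_trans (abs_nonneg (d ⟨0, hn⟩ * (Y *ᵥ d) ⟨0, hn⟩)) ?_
        exact Finset.le_sup' (fun i => |d i * (Y *ᵥ d) i|) (Finset.mem_univ (⟨0, hn⟩ : Fin n))
      set η : ℝ := min (min (1 - tb) (1/(K+1)))
        (Finset.univ.inf' hne (fun i => xb i / (2*(|d i|+1)))) with hηdef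
      have hηpos : 0 < η := by
        rw [hηdef]
        apply lt_min (lt_min (by linarith) (by positivity))
        rw [Finset.lt_inf'_iff]
        intro i _
        exact div_pos (hxbpos i) (by positivity)
      have hη1 : η ≤ 1 - tb := le_trans (min_le_left _ _) (min_le_left _ _)
      have hη2 : η ≤ 1/(K+1) := le_trans (min_le_left _ _) (min_le_right _ _)
      have hη3 : ∀ i, η ≤ xb i / (2*(|d i|+1)) := by
        intro i
        exact le_trans (min_le_right _ _) (Finset.inf'_le _ (Finset.mem_univ i))
      set x' : Fin n → ℝ := xb + η • d with hx'def
      have hx'pos : ∀ i, 0 < x' i := by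
        intro i
        show 0 < xb i + η * d i
        have h1 : η * (|d i| + 1) ≤ xb i / 2 := by
          have h2 := hη3 i
          have h3 : (0:ℝ) < 2*(|d i|+1) := by positivity
          rw [le_div_iff₀ h3] at h2
          ring_nf at h2 ⊢
          linarith
        have h4 : -(η * d i) ≤ η * |d i| := by
          have := neg_abs_le (d i)
          nlinarith [hηpos.le]
        nlinarith [hηpos.le, hxbpos i]
      have hx'sub : ∀ i, Q (tb + η) i ≤ Pc Y Vs x' i := by
        intro i
        rw [hx'def, pc_expand]
        have hexi : Pc Y Vs xb i = Q tb i := by rw [hxbex]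
        have hQi : Q (tb + η) i = Q tb i + η * Pp i := by
          rw [hQdef]
          dsimp only
          ring
        have hKi : d i * (Y *ᵥ d) i ≤ K :=
          le_trans (le_abs_self _)
            (Finset.le_sup' (fun i => |d i * (Y *ᵥ d) i|) (Finset.mem_univ i))
        have h5 : η * (d i * (Y *ᵥ d) i) ≤ 1 := by
          have h7 : (0:ℝ) < K + 1 := by linarith
          have h6 : η * (K+1) ≤ 1 := by
            calc η * (K+1) ≤ (1/(K+1)) * (K+1) := mul_le_mul_of_nonneg_right hη2 h7.le
              _ = 1 := by field_simp
          calc η * (d i * (Y *ᵥ d) i) ≤ η * K :=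
              mul_le_mul_of_nonneg_left hKi hηpos.le
            _ ≤ 1 := by nlinarith
        rw [hkey i, hQi, hexi]
        nlinarith [sq_nonneg η, hηpos.le, mul_le_mul_of_nonneg_left h5 hηpos.le]
      have hmem : (tb + η) ∈ W := by
        rw [hWdef]
        simp only [Set.mem_setOf_eq, Set.mem_Icc]
        exact ⟨⟨by linarith, by linarith⟩, x', hx'pos, hx'sub⟩
      have := le_csSup hWbdd hmem
      linarith
  rw [htbeq] at htbW
  obtain ⟨_, a, hapos, hasub⟩ := htbW
  have hQ1 : ∀ i, Q 1 i = P i := by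
    intro i
    rw [hQdef, hPdecomp i]
    dsimp only
    ring
  have hasub' : ∀ i, P i ≤ Pc Y Vs a i := by
    intro i
    rw [← hQ1 i]
    exact hasub i
  obtain ⟨xb, h1, h2, _⟩ := sup_subsol hn hPD hZ hirr P a hapos hasub'
  exact ⟨xb, h1, h2⟩

end S17

theorem stmt_17 (n : ℕ) (hn : 1 ≤ n)
    (Y : Matrix (Fin n) (Fin n) ℝ)
    (hPD : Y.PosDef)
    (hZ : IsZmat Y)
    (hirr : IsIrred Y)
    (Vs : Fin n → ℝ) (hVs : ∀ i, 0 < Vs i)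
    (hInn : ∀ i, 0 ≤ (Y *ᵥ Vs) i) (hIne : Y *ᵥ Vs ≠ 0) :
    IsClosed (Fset Y Vs) ∧
    Convex ℝ (Fset Y Vs) ∧
    Fset Y Vs = ⋂ l ∈ Lam1 Y, Hset Y Vs l ∧
    Fset Y Vs = Set.range (Pc Y Vs) := by
  have hY := S17.transpose_eq hPD
  have hRK : Set.range (Pc Y Vs) ⊆ ⋂ l ∈ Lam1 Y, Hset Y Vs l := by
    rintro p ⟨x, rfl⟩
    refine Set.mem_iInter₂.2 fun l hl => ?_
    exact S17.pc_le_qnorm hY hl.1 x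
  have hKF : (⋂ l ∈ Lam1 Y, Hset Y Vs l) ⊆ Fset Y Vs := by
    intro P hPm
    have hP : ∀ l ∈ Lam1 Y, l ⬝ᵥ P ≤ qnorm Y l (phiv Y Vs l) := by
      intro l hl
      exact Set.mem_iInter₂.1 hPm l hl
    obtain ⟨x, hxpos, hxeq⟩ :=
      S17.hard_inclusion hn hPD hZ hirr hVs hInn hIne P hP
    exact ⟨x, hxpos, hxeq⟩
  have hFR : Fset Y Vs ⊆ Set.range (Pc Y Vs) := by
    rintro P ⟨x, _, hx⟩
    exact ⟨x, hx⟩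
  have hFK : Fset Y Vs = ⋂ l ∈ Lam1 Y, Hset Y Vs l :=
    Set.Subset.antisymm (hFR.trans hRK) hKF
  have hFRe : Fset Y Vs = Set.range (Pc Y Vs) :=
    Set.Subset.antisymm hFR (fun p hp => hKF (hRK hp))
  refine ⟨?_, ?_, hFK, hFRe⟩
  · rw [hFK]
    apply isClosed_biInter
    intro l _
    have hcont : Continuous fun y : Fin n → ℝ => l ⬝ᵥ y := by
      simp only [dotProduct]
      exact continuous_finset_sum _ fun i _ => continuous_const.mul (continuous_apply i)
    exact isClosed_le hcont continuous_const
  · rw [hFK]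
    apply convex_iInter₂
    intro l _
    have hlin : IsLinearMap ℝ fun y : Fin n → ℝ => l ⬝ᵥ y :=
      ⟨fun x y => dotProduct_add l x y, fun c x => dotProduct_smul c l x⟩
    exact convex_halfSpace_le hlin _
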